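/- arXiv:2401.11608 — 3 statements merged into one kernel-verified Lean document; each statement's English description precedes it below -/
import Mathlib

section
/- Mixed Jacobian-based bound, pointwise version: let f : ℝⁿ → ℝᵐ be continuously differentiable, J an inclusion function for df, x° ∈ [x̲,x̄] a center, and O = (o₁,...,oₙ) an ordering (permutation) of {1,...,n}. Define the interval matrix M by setting its o_i-th column to the o_i-th column of [J(x°_{O_i : x̲}, x°_{O_i : x̄})], where x°_{O_i : y} replaces the coordinates of x° indexed by {o₁,...,o_i} with those of y. Then for every x ∈ [x̲,x̄], f(x) ∈ [M](x − x°) + f(x°). -/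
/-- Lower endpoint of the product of the real intervals `[al,ah]` and `[bl,bh]`. -/
def imulLo (al ah bl bh : ℝ) : ℝ :=
  min (min (al * bl) (al * bh)) (min (ah * bl) (ah * bh))

/-- Upper endpoint of the product of the real intervals `[al,ah]` and `[bl,bh]`. -/
def imulHi (al ah bl bh : ℝ) : ℝ :=
  max (max (al * bl) (al * bh)) (max (ah * bl) (ah * bh))

/-- The replacement `c_{O_k : y}`: for the ordering (permutation) `o`, replace
the coordinates of `c` indexed by the first `k` elements `o 0, …, o (k-1)` of
the ordering by those of `y`. -/
def repl {n : ℕ} (o : Equiv.Perm (Fin n)) (k : ℕ) (c y : Fin n → ℝ) : Fin n → ℝ :=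
  fun j => if (o.symm j : ℕ) < k then y j else c j

/-- Mean value theorem, symmetric form. -/
lemma mvt' (g G : ℝ → ℝ) (h : ∀ t, HasDerivAt g (G t) t) (a b : ℝ) :
    ∃ ξ ∈ Set.uIcc a b, g b - g a = G ξ * (b - a) := by
  rcases lt_trichotomy a b with hab | rfl | hab
  · obtain ⟨ξ, hξ, he⟩ := exists_hasDerivAt_eq_slope g G hab
      (fun t _ => (h t).continuousAt.continuousWithinAt) (fun t _ => h t)
    refine ⟨ξ, ?_, ?_⟩
    · rw [Set.uIcc_of_le hab.le]; exact Set.Ioo_subset_Icc_self hξ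
    · rw [he, div_mul_cancel₀ _ (sub_ne_zero.mpr hab.ne')]
  · exact ⟨a, Set.left_mem_uIcc, by ring⟩
  · obtain ⟨ξ, hξ, he⟩ := exists_hasDerivAt_eq_slope g G hab
      (fun t _ => (h t).continuousAt.continuousWithinAt) (fun t _ => h t)
    refine ⟨ξ, ?_, ?_⟩
    · rw [Set.uIcc_of_ge hab.le]; exact Set.Ioo_subset_Icc_self hξ
    · have hne : a - b ≠ 0 := sub_ne_zero.mpr hab.ne'
      have := he
      field_simp at this
      nlinarith [this]

/-- Product bound: if `al ≤ a ≤ ah` then `a*d ∈ [imulLo al ah d d, imulHi al ah d d]`. -/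
lemma imul_bound (al ah a d : ℝ) (h1 : al ≤ a) (h2 : a ≤ ah) :
    imulLo al ah d d ≤ a * d ∧ a * d ≤ imulHi al ah d d := by
  simp only [imulLo, imulHi, min_self, max_self]
  constructor
  · rcases le_total 0 d with hd | hd
    · exact le_trans (min_le_left _ _) (by nlinarith)
    · exact le_trans (min_le_right _ _) (by nlinarith)
  · rcases le_total 0 d with hd | hd
    · exact le_trans (by nlinarith : a * d ≤ ah * d) (le_max_right _ _)
    · exact le_trans (by nlinarith : a * d ≤ al * d) (le_max_left _ _)

/-- Mixed Jacobian-based bound, pointwise version: with `J` an inclusion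
function for the Jacobian of `f`, center `c ∈ [xl,xu]` and ordering `o`, the
mixed interval Jacobian `M` whose `o i`-th column is the `o i`-th column of
`[J(c_{O_{i+1}:xl}, c_{O_{i+1}:xu})]` satisfies
`f x ∈ [M](x − c) + f c` for every `x ∈ [xl,xu]`. -/
theorem mixed_jacobian_pointwise_bound {n m : ℕ}
    (f : (Fin n → ℝ) → (Fin m → ℝ)) (hf : ContDiff ℝ 1 f)
    (Jlo Jhi : (Fin n → ℝ) → (Fin n → ℝ) → Matrix (Fin m) (Fin n) ℝ)
    (hJ : ∀ al au : Fin n → ℝ, al ≤ au → ∀ y ∈ Set.Icc al au, ∀ i j,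
      Jlo al au i j ≤ fderiv ℝ f y (Pi.single j 1) i ∧
        fderiv ℝ f y (Pi.single j 1) i ≤ Jhi al au i j)
    (xl xu : Fin n → ℝ) (hx : xl ≤ xu)
    (c : Fin n → ℝ) (hc : c ∈ Set.Icc xl xu)
    (o : Equiv.Perm (Fin n))
    (Mlo Mhi : Matrix (Fin m) (Fin n) ℝ)
    (hMlo : ∀ i j, Mlo i j =
      Jlo (repl o ((o.symm j : ℕ) + 1) c xl) (repl o ((o.symm j : ℕ) + 1) c xu) i j)
    (hMhi : ∀ i j, Mhi i j =
      Jhi (repl o ((o.symm j : ℕ) + 1) c xl) (repl o ((o.symm j : ℕ) + 1) c xu) i j)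
    (x : Fin n → ℝ) (hmem : x ∈ Set.Icc xl xu) (i : Fin m) :
    (∑ j, imulLo (Mlo i j) (Mhi i j) (x j - c j) (x j - c j)) + f c i ≤ f x i ∧
      f x i ≤ (∑ j, imulHi (Mlo i j) (Mhi i j) (x j - c j) (x j - c j)) + f c i := by
  have hdiff : Differentiable ℝ f := hf.differentiable one_ne_zero
  set w : ℕ → Fin n → ℝ := fun k => repl o k c x with hw
  have hwn : w n = x := by
    funext j'; simp [hw, repl, (o.symm j').is_lt]
  have hw0 : w 0 = c := by funext j'; simp [hw, repl]
  have key : ∀ k : Fin n,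
      imulLo (Mlo i (o k)) (Mhi i (o k)) (x (o k) - c (o k)) (x (o k) - c (o k))
        ≤ f (w ((k : ℕ) + 1)) i - f (w (k : ℕ)) i ∧
      f (w ((k : ℕ) + 1)) i - f (w (k : ℕ)) i
        ≤ imulHi (Mlo i (o k)) (Mhi i (o k)) (x (o k) - c (o k)) (x (o k) - c (o k)) := by
    intro k
    set j := o k with hj
    have hoj : (o.symm j : ℕ) = (k : ℕ) := by simp [hj]
    set p : ℝ → Fin n → ℝ := fun t => Function.update (w (k : ℕ)) j t with hp_def
    have hpa : p (c j) = w (k : ℕ) := by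
      funext j'
      by_cases h : j' = j
      · subst h; simp [hp_def, hw, repl, hoj]
      · simp [hp_def, Function.update_apply, h]
    have hpb : p (x j) = w ((k : ℕ) + 1) := by
      funext j'
      by_cases h : j' = j
      · subst h; simp [hp_def, hw, repl, hoj]
      · have hne : (o.symm j' : ℕ) ≠ (k : ℕ) := by
          intro hEq
          apply h
          have h2 : o.symm j' = o.symm j := by
            apply Fin.ext; rw [hoj]; exact hEq
          calc j' = o (o.symm j') := (o.apply_symm_apply j').symm
            _ = o (o.symm j) := by rw [h2]
            _ = j := o.apply_symm_apply j
        simp only [hp_def, Function.update_apply, h, if_false, hw, repl]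
        split_ifs <;> first | rfl | omega
    have hp : ∀ t, HasDerivAt p (Pi.single j 1) t := by
      intro t
      have hrepr : p = fun t => Function.update (w (k : ℕ)) j 0 + t • Pi.single j (1 : ℝ) := by
        funext t j'
        by_cases h : j' = j <;>
          simp [hp_def, Function.update_apply, h, Pi.single_apply]
      rw [hrepr]
      simpa using
        (HasDerivAt.const_add (Function.update (w (k : ℕ)) j 0)
          ((hasDerivAt_id t).smul_const (Pi.single j (1 : ℝ))))
    have hg : ∀ t, HasDerivAt (fun t => f (p t) i)
        (fderiv ℝ f (p t) (Pi.single j 1) i) t := by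
      intro t
      exact hasDerivAt_pi.mp (((hdiff (p t)).hasFDerivAt).comp_hasDerivAt t (hp t)) i
    obtain ⟨ξ, hξ, heq⟩ := mvt' (fun t => f (p t) i)
      (fun t => fderiv ℝ f (p t) (Pi.single j 1) i) hg (c j) (x j)
    rw [hpa, hpb] at heq
    set al := repl o ((k : ℕ) + 1) c xl with hal
    set au := repl o ((k : ℕ) + 1) c xu with hau
    have hale : al ≤ au := by
      intro j'
      simp only [hal, hau, repl]
      split_ifs
      · exact hx j'
      · exact le_rfl
    have hξ' : min (c j) (x j) ≤ ξ ∧ ξ ≤ max (c j) (x j) := by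
      rw [Set.uIcc] at hξ
      exact ⟨hξ.1, hξ.2⟩
    have hcoord : ∀ j', al j' ≤ p ξ j' ∧ p ξ j' ≤ au j' := by
      intro j'
      by_cases h : j' = j
      · subst h
        have hjlt : (o.symm j : ℕ) < (k : ℕ) + 1 := by rw [hoj]; omega
        have e1 : p ξ j = ξ := by simp [hp_def]
        have e2 : al j = xl j := by simp [hal, repl, hjlt]
        have e3 : au j = xu j := by simp [hau, repl, hjlt]
        rw [e1, e2, e3]
        constructor
        · exact le_trans (le_min (hc.1 j) (hmem.1 j)) hξ'.1
        · exact le_trans hξ'.2 (max_le (hc.2 j) (hmem.2 j))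
      · have hne : (o.symm j' : ℕ) ≠ (k : ℕ) := by
          intro hEq
          apply h
          have h2 : o.symm j' = o.symm j := by
            apply Fin.ext; rw [hoj]; exact hEq
          calc j' = o (o.symm j') := (o.apply_symm_apply j').symm
            _ = o (o.symm j) := by rw [h2]
            _ = j := o.apply_symm_apply j
        simp only [hp_def, Function.update_apply, h, if_false, hw, repl, hal, hau]
        by_cases h2 : (o.symm j' : ℕ) < (k : ℕ)
        · have h3 : (o.symm j' : ℕ) < (k : ℕ) + 1 := by omega
          simp only [h2, h3, if_pos]
          exact ⟨hmem.1 j', hmem.2 j'⟩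
        · have h3 : ¬ (o.symm j' : ℕ) < (k : ℕ) + 1 := by omega
          simp only [h2, h3, if_false]
          exact ⟨le_rfl, le_rfl⟩
    have hmemξ : p ξ ∈ Set.Icc al au :=
      ⟨fun j' => (hcoord j').1, fun j' => (hcoord j').2⟩
    have hbound := hJ al au hale (p ξ) hmemξ i j
    have hlo' : Mlo i j ≤ fderiv ℝ f (p ξ) (Pi.single j 1) i := by
      rw [hMlo i j, hoj]; exact hbound.1
    have hhi' : fderiv ℝ f (p ξ) (Pi.single j 1) i ≤ Mhi i j := by
      rw [hMhi i j, hoj]; exact hbound.2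
    obtain ⟨h1, h2⟩ := imul_bound (Mlo i j) (Mhi i j)
      (fderiv ℝ f (p ξ) (Pi.single j 1) i) (x j - c j) hlo' hhi'
    rw [heq]
    exact ⟨h1, h2⟩
  have tele : f x i - f c i = ∑ k : Fin n, (f (w ((k : ℕ) + 1)) i - f (w (k : ℕ)) i) := by
    rw [Fin.sum_univ_eq_sum_range (fun k => f (w (k + 1)) i - f (w k) i),
      Finset.sum_range_sub (fun k => f (w k) i), hwn, hw0]
  have hlo : ∑ j, imulLo (Mlo i j) (Mhi i j) (x j - c j) (x j - c j) ≤ f x i - f c i := by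
    rw [tele, ← Equiv.sum_comp o (fun j => imulLo (Mlo i j) (Mhi i j) (x j - c j) (x j - c j))]
    exact Finset.sum_le_sum fun k _ => (key k).1
  have hhi : f x i - f c i ≤ ∑ j, imulHi (Mlo i j) (Mhi i j) (x j - c j) (x j - c j) := by
    rw [tele, ← Equiv.sum_comp o (fun j => imulHi (Mlo i j) (Mhi i j) (x j - c j) (x j - c j))]
    exact Finset.sum_le_sum fun k _ => (key k).2
  constructor <;> linarith
end

section
/- Mixed Jacobian-based inclusion function: under the hypotheses of the pointwise mixed Jacobian-based bound, the map F with [F(x̲,x̄)] = [M_O^{x°}(x̲,x̄)]([x̲,x̄] − x°) + f(x°) is an inclusion function for f, i.e., F̲(x̲,x̄) ≤ f(x) ≤ F̄(x̲,x̄) for all x ∈ [x̲,x̄]. -/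
private lemma min_mul_le {al a au : ℝ} (hal : al ≤ a) (hau : a ≤ au) (k : ℝ) :
    min (al * k) (au * k) ≤ a * k := by
  rcases le_total 0 k with h | h
  · exact min_le_of_left_le (mul_le_mul_of_nonneg_right hal h)
  · exact min_le_of_right_le (mul_le_mul_of_nonpos_right hau h)

private lemma mul_le_max {al a au : ℝ} (hal : al ≤ a) (hau : a ≤ au) (k : ℝ) :
    a * k ≤ max (al * k) (au * k) := by
  rcases le_total 0 k with h | h
  · exact le_max_of_le_right (mul_le_mul_of_nonneg_right hau h)
  · exact le_max_of_le_left (mul_le_mul_of_nonpos_right hal h)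

private lemma imulLo_le {al a au bl b bu : ℝ} (hal : al ≤ a) (hau : a ≤ au)
    (hbl : bl ≤ b) (hbu : b ≤ bu) : imulLo al au bl bu ≤ a * b := by
  have h1 : min (al * b) (au * b) ≤ a * b := min_mul_le hal hau b
  have h2 : min (al * bl) (al * bu) ≤ al * b := by
    have := min_mul_le hbl hbu al
    simpa [mul_comm] using this
  have h3 : min (au * bl) (au * bu) ≤ au * b := by
    have := min_mul_le hbl hbu au
    simpa [mul_comm] using this
  unfold imulLo
  rcases min_cases (al * b) (au * b) with ⟨he, _⟩ | ⟨he, _⟩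
  · calc min (min (al * bl) (al * bu)) (min (au * bl) (au * bu)) ≤ al * b :=
        min_le_of_left_le h2
      _ = min (al * b) (au * b) := he.symm
      _ ≤ a * b := h1
  · calc min (min (al * bl) (al * bu)) (min (au * bl) (au * bu)) ≤ au * b :=
        min_le_of_right_le h3
      _ = min (al * b) (au * b) := he.symm
      _ ≤ a * b := h1

private lemma le_imulHi {al a au bl b bu : ℝ} (hal : al ≤ a) (hau : a ≤ au)
    (hbl : bl ≤ b) (hbu : b ≤ bu) : a * b ≤ imulHi al au bl bu := by
  have h1 : a * b ≤ max (al * b) (au * b) := mul_le_max hal hau b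
  have h2 : al * b ≤ max (al * bl) (al * bu) := by
    have := mul_le_max hbl hbu al
    simpa [mul_comm] using this
  have h3 : au * b ≤ max (au * bl) (au * bu) := by
    have := mul_le_max hbl hbu au
    simpa [mul_comm] using this
  unfold imulHi
  rcases max_cases (al * b) (au * b) with ⟨he, _⟩ | ⟨he, _⟩
  · calc a * b ≤ max (al * b) (au * b) := h1
      _ = al * b := he
      _ ≤ max (al * bl) (al * bu) := h2
      _ ≤ _ := le_max_left _ _
  · calc a * b ≤ max (al * b) (au * b) := h1
      _ = au * b := he
      _ ≤ max (au * bl) (au * bu) := h3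
      _ ≤ _ := le_max_right _ _

/-- Mixed Jacobian-based inclusion function: the map `F` with
`[F(xl,xu)] = [M_O^c(xl,xu)]([xl,xu] − c) + f c` is an inclusion function for
`f`, i.e. `F̲(xl,xu) ≤ f x ≤ F̄(xl,xu)` for all `x ∈ [xl,xu]`. -/
theorem mixed_jacobian_inclusion_function {n m : ℕ}
    (f : (Fin n → ℝ) → (Fin m → ℝ)) (hf : ContDiff ℝ 1 f)
    (Jlo Jhi : (Fin n → ℝ) → (Fin n → ℝ) → Matrix (Fin m) (Fin n) ℝ)
    (hJ : ∀ al au : Fin n → ℝ, al ≤ au → ∀ y ∈ Set.Icc al au, ∀ i j,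
      Jlo al au i j ≤ fderiv ℝ f y (Pi.single j 1) i ∧
        fderiv ℝ f y (Pi.single j 1) i ≤ Jhi al au i j)
    (xl xu : Fin n → ℝ) (hx : xl ≤ xu)
    (c : Fin n → ℝ) (hc : c ∈ Set.Icc xl xu)
    (o : Equiv.Perm (Fin n))
    (Mlo Mhi : Matrix (Fin m) (Fin n) ℝ)
    (hMlo : ∀ i j, Mlo i j =
      Jlo (repl o ((o.symm j : ℕ) + 1) c xl) (repl o ((o.symm j : ℕ) + 1) c xu) i j)
    (hMhi : ∀ i j, Mhi i j =
      Jhi (repl o ((o.symm j : ℕ) + 1) c xl) (repl o ((o.symm j : ℕ) + 1) c xu) i j)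
    (x : Fin n → ℝ) (hmem : x ∈ Set.Icc xl xu) (i : Fin m) :
    (∑ j, imulLo (Mlo i j) (Mhi i j) (xl j - c j) (xu j - c j)) + f c i ≤ f x i ∧
      f x i ≤ (∑ j, imulHi (Mlo i j) (Mhi i j) (xl j - c j) (xu j - c j)) + f c i := by
  have hdf : Differentiable ℝ f := hf.differentiable one_ne_zero
  -- the telescoping points
  set w : ℕ → Fin n → ℝ := fun k => repl o k c x with hw
  have hw0 : w 0 = c := by funext l; simp [hw, repl]
  have hwn : w n = x := by
    funext l; simp [hw, repl, (o.symm l).isLt]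
  -- step existence
  have key : ∀ k : Fin n, ∃ dk : ℝ,
      (Mlo i (o k) ≤ dk ∧ dk ≤ Mhi i (o k)) ∧
      f (w (k + 1)) i - f (w k) i = dk * (x (o k) - c (o k)) := by
    intro k
    set j : Fin n := o k with hj
    have hsymm : o.symm j = k := by simp [hj]
    set a : Fin n → ℝ := w (k : ℕ) with ha
    set φ : ℝ → Fin n → ℝ := fun t => Function.update a j t with hφ
    have hiff : ∀ l, l ≠ j → (((o.symm l : ℕ) < (k : ℕ) + 1) ↔ ((o.symm l : ℕ) < (k : ℕ))) := by
      intro l hl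
      have hne : (o.symm l : ℕ) ≠ (k : ℕ) := by
        intro h
        apply hl
        have : o.symm l = k := Fin.ext h
        rw [← hsymm] at this
        exact o.symm.injective this
      exact ⟨fun h => lt_of_le_of_ne (Nat.lt_succ_iff.mp h) hne, fun h => Nat.lt_succ_of_lt h⟩
    have hφc : φ (c j) = a := by
      funext l
      by_cases hl : l = j
      · subst hl; simp [hφ, ha, hw, repl, hsymm]
      · simp [hφ, Function.update_apply, hl, ha]
    have hφx : φ (x j) = w ((k : ℕ) + 1) := by
      funext l
      by_cases hl : l = j
      · subst hl; simp [hφ, hw, repl, hsymm]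
      · simp [hφ, Function.update_apply, hl, ha, hw, repl, hiff l hl]
    -- the bounding box
    set bl : Fin n → ℝ := repl o ((k : ℕ) + 1) c xl with hbl
    set bu : Fin n → ℝ := repl o ((k : ℕ) + 1) c xu with hbu
    have hble : bl ≤ bu := by
      intro l
      simp only [hbl, hbu, repl]
      split_ifs
      · exact hx l
      · exact le_rfl
    have hφmem : ∀ t, xl j ≤ t → t ≤ xu j → φ t ∈ Set.Icc bl bu := by
      intro t ht1 ht2
      constructor <;> intro l <;>
        by_cases hl : l = j
      · subst hl; simpa [hbl, repl, hsymm, hφ] using ht1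
      · simp only [hφ, Function.update_apply, hl, if_false, hbl, repl, ha, hw, hiff l hl]
        split_ifs with h1
        · exact (hmem.1 l)
        · exact le_rfl
      · subst hl; simpa [hbu, repl, hsymm, hφ] using ht2
      · simp only [hφ, Function.update_apply, hl, if_false, hbu, repl, ha, hw, hiff l hl]
        split_ifs with h1
        · exact (hmem.2 l)
        · exact le_rfl
    -- derivative of g t = f (φ t) i
    set g : ℝ → ℝ := fun t => f (φ t) i with hg
    set δ : ℝ → ℝ := fun t => fderiv ℝ f (φ t) (Pi.single j 1) i with hδ
    have hgderiv : ∀ t : ℝ, HasDerivAt g (δ t) t := by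
      intro t
      have h1 : HasDerivAt φ (Pi.single j 1) t := hasDerivAt_update a j t
      have h2 : HasDerivAt (fun t => f (φ t)) (fderiv ℝ f (φ t) (Pi.single j 1)) t :=
        (hdf (φ t)).hasFDerivAt.comp_hasDerivAt t h1
      have h3 := (ContinuousLinearMap.proj (R := ℝ) (φ := fun _ : Fin m => ℝ)
        i).hasFDerivAt.comp_hasDerivAt t h2
      exact h3
    have hδbound : ∀ t, xl j ≤ t → t ≤ xu j → Mlo i j ≤ δ t ∧ δ t ≤ Mhi i j := by
      intro t ht1 ht2
      have := hJ bl bu hble (φ t) (hφmem t ht1 ht2) i j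
      have hsymm' : ((o.symm j : ℕ) : ℕ) = (k : ℕ) := by rw [hsymm]
      rw [hMlo i j, hMhi i j, hsymm']
      exact this
    -- now MVT
    rcases lt_trichotomy (c j) (x j) with hlt | heq | hgt
    · obtain ⟨ξ, hξmem, hξ⟩ := exists_hasDerivAt_eq_slope g δ hlt
        (fun t _ => (hgderiv t).continuousAt.continuousWithinAt)
        (fun t _ => hgderiv t)
      refine ⟨δ ξ, ?_, ?_⟩
      · exact hδbound ξ (le_trans (hc.1 j) hξmem.1.le) (le_trans hξmem.2.le (hmem.2 j))
      · have hne : x j - c j ≠ 0 := sub_ne_zero.mpr (ne_of_gt hlt)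
        have heq : δ ξ = (g (x j) - g (c j)) / (x j - c j) := hξ
        field_simp at heq
        rw [← hφx, ← hφc]
        show g (x j) - g (c j) = δ ξ * (x j - c j)
        linarith [heq]
    · refine ⟨δ (c j), hδbound (c j) (hc.1 j) (hc.2 j), ?_⟩
      rw [← hφx, ← hφc, heq]
      simp
    · obtain ⟨ξ, hξmem, hξ⟩ := exists_hasDerivAt_eq_slope g δ hgt
        (fun t _ => (hgderiv t).continuousAt.continuousWithinAt)
        (fun t _ => hgderiv t)
      refine ⟨δ ξ, ?_, ?_⟩
      · exact hδbound ξ (le_trans (hmem.1 j) hξmem.1.le) (le_trans hξmem.2.le (hc.2 j))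
      · have hne : c j - x j ≠ 0 := sub_ne_zero.mpr (ne_of_gt hgt)
        have heq : δ ξ = (g (c j) - g (x j)) / (c j - x j) := hξ
        field_simp at heq
        rw [← hφx, ← hφc]
        show g (x j) - g (c j) = δ ξ * (x j - c j)
        nlinarith [heq]
  choose D hD1 hD2 using key
  -- telescoping
  have htel : f x i - f c i = ∑ k : Fin n, D k * (x (o k) - c (o k)) := by
    have h1 : ∑ k ∈ Finset.range n, (f (w (k + 1)) i - f (w k) i)
        = f (w n) i - f (w 0) i := Finset.sum_range_sub (fun k => f (w k) i) n
    rw [hwn, hw0] at h1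
    calc f x i - f c i = ∑ k ∈ Finset.range n, (f (w (k + 1)) i - f (w k) i) := h1.symm
      _ = ∑ k : Fin n, (f (w ((k : ℕ) + 1)) i - f (w (k : ℕ)) i) :=
        Finset.sum_range fun k => f (w (k + 1)) i - f (w k) i
      _ = ∑ k : Fin n, D k * (x (o k) - c (o k)) :=
        Finset.sum_congr rfl fun k _ => hD2 k
  have htel' : f x i = f c i + ∑ j, D (o.symm j) * (x j - c j) := by
    have := Equiv.sum_comp o (fun j => D (o.symm j) * (x j - c j))
    simp only [Equiv.symm_apply_apply] at this
    rw [← this, ← htel]; ring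
  constructor
  · rw [htel']
    have : ∑ j, imulLo (Mlo i j) (Mhi i j) (xl j - c j) (xu j - c j)
        ≤ ∑ j, D (o.symm j) * (x j - c j) := by
      apply Finset.sum_le_sum
      intro j _
      have h1 := hD1 (o.symm j)
      simp only [Equiv.apply_symm_apply] at h1
      exact imulLo_le h1.1 h1.2 (sub_le_sub_right (hmem.1 j) _) (sub_le_sub_right (hmem.2 j) _)
    linarith
  · rw [htel']
    have : ∑ j, D (o.symm j) * (x j - c j)
        ≤ ∑ j, imulHi (Mlo i j) (Mhi i j) (xl j - c j) (xu j - c j) := by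
      apply Finset.sum_le_sum
      intro j _
      have h1 := hD1 (o.symm j)
      simp only [Equiv.apply_symm_apply] at h1
      exact le_imulHi h1.1 h1.2 (sub_le_sub_right (hmem.1 j) _) (sub_le_sub_right (hmem.2 j) _)
    linarith
end

section
/- Monotone inclusion functions induce monotone embedding dynamics with respect to the southeast order: if F is a monotone inclusion function for f(x,w), then the embedding vector field E defined by E̲_i(x̲,x̄,w̲,w̄) = F̲_i(x̲, x̄_{i:x̲}, w̲, w̄) and Ē_i(x̲,x̄,w̲,w̄) = F̄_i(x̲_{i:x̄}, x̄, w̲, w̄) satisfies the Kamke–Müller condition for the southeast order: if (x̲,x̄) ≤_SE (y̲,ȳ), x̲_i = y̲_i, and (w̲,w̄) ≤_SE (v̲,v̄), then E̲_i(x̲,x̄,w̲,w̄) ≤ E̲_i(y̲,ȳ,v̲,v̄) (and the symmetric condition for Ē). -/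
/-- A monotone inclusion function for `f(x,w)` induces embedding dynamics
`E̲_i(xl,xu,wl,wu) = F̲_i(xl, xu_{i:xl}, wl, wu)`,
`Ē_i(xl,xu,wl,wu) = F̄_i(xl_{i:xu}, xu, wl, wu)` satisfying the Kamke–Müller
condition for the southeast order. -/
theorem embedding_kamke_muller {n q : ℕ}
    (f : (Fin n → ℝ) → (Fin q → ℝ) → (Fin n → ℝ))
    (Flo Fhi : (Fin n → ℝ) → (Fin n → ℝ) → (Fin q → ℝ) → (Fin q → ℝ) → (Fin n → ℝ))
    -- F is an inclusion function for f ...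
    (hF : ∀ xl xu wl wu, xl ≤ xu → wl ≤ wu →
      ∀ x ∈ Set.Icc xl xu, ∀ w ∈ Set.Icc wl wu,
        Flo xl xu wl wu ≤ f x w ∧ f x w ≤ Fhi xl xu wl wu)
    -- ... which is monotone: containment of input intervals nests the bounds.
    (hFmono : ∀ xl xu wl wu yl yu vl vu, xl ≤ xu → wl ≤ wu →
      yl ≤ xl → xu ≤ yu → vl ≤ wl → wu ≤ vu →
        Flo yl yu vl vu ≤ Flo xl xu wl wu ∧ Fhi xl xu wl wu ≤ Fhi yl yu vl vu)
    (xl xu yl yu : Fin n → ℝ) (wl wu vl vu : Fin q → ℝ)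
    (hxl : xl ≤ xu) (hyl : yl ≤ yu) (hwl : wl ≤ wu) (hvl : vl ≤ vu)
    -- (xl,xu) ≤SE (yl,yu) and (wl,wu) ≤SE (vl,vu)
    (hSEx : xl ≤ yl ∧ yu ≤ xu) (hSEw : wl ≤ vl ∧ vu ≤ wu)
    (i : Fin n) :
    -- Kamke–Müller for the lower component ...
    (xl i = yl i →
      Flo xl (Function.update xu i (xl i)) wl wu i ≤
        Flo yl (Function.update yu i (yl i)) vl vu i) ∧
    -- ... and the symmetric condition for the upper component.
    (xu i = yu i →
      Fhi (Function.update yl i (yu i)) yu vl vu i ≤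
        Fhi (Function.update xl i (xu i)) xu wl wu i) := by
  obtain ⟨hxy, hyx⟩ := hSEx
  obtain ⟨hwv, hvw⟩ := hSEw
  constructor
  · intro hi
    have h1 : yl ≤ Function.update yu i (yl i) := by
      intro j; rcases eq_or_ne j i with rfl | hj
      · simp
      · simp [Function.update_of_ne hj]; exact hyl j
    have h2 : Function.update yu i (yl i) ≤ Function.update xu i (xl i) := by
      intro j; rcases eq_or_ne j i with rfl | hj
      · simp [hi]
      · simp [Function.update_of_ne hj]; exact hyx j
    exact (hFmono yl (Function.update yu i (yl i)) vl vu xl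
      (Function.update xu i (xl i)) wl wu h1 hvl hxy h2 hwv hvw).1 i
  · intro hi
    have h1 : Function.update yl i (yu i) ≤ yu := by
      intro j; rcases eq_or_ne j i with rfl | hj
      · simp
      · simp [Function.update_of_ne hj]; exact hyl j
    have h2 : Function.update xl i (xu i) ≤ Function.update yl i (yu i) := by
      intro j; rcases eq_or_ne j i with rfl | hj
      · simp [hi]
      · simp [Function.update_of_ne hj]; exact hxy j
    exact (hFmono (Function.update yl i (yu i)) yu vl vu
      (Function.update xl i (xu i)) xu wl wu h1 hvl h2 hyx hwv hvw).2 i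
end
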